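/- Quantitative subject reduction: if t is closed, π derives ⊢ t : A, and t weak-head reduces to u (i.e., (λy.s)r r₁…r_h →wh s{y := r} r₁…r_h), then there is a derivation π' of ⊢ u : A with |π| > |π'|. -/

import Mathlib

/-! # Tree intersection types -/

mutual
/-- Linear types: `A ::= ⋆ | T → A`. -/
inductive LinTy : Type where
  | star : LinTy
  | arr : TreeTy → LinTy → LinTy
/-- Generic types: linear types or tree types. -/
inductive GenTy : Type where
  | lin : LinTy → GenTy
  | tree : TreeTy → GenTy
/-- Tree types: finite sequences of generic types. -/
inductive TreeTy : Type where
  | node : List GenTy → TreeTy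
end

mutual
/-- Leaves of a generic type. -/
def GenTy.leaves : GenTy → List LinTy
  | .lin A => [A]
  | .tree T => TreeTy.leaves T
  termination_by g => sizeOf g
/-- Leaves extraction on tree types. -/
def TreeTy.leaves : TreeTy → List LinTy
  | .node gs => gs.attach.flatMap (fun g => GenTy.leaves g.1)
  termination_by T => sizeOf T
  decreasing_by simp_wf; have := List.sizeOf_lt_of_mem g.2; omega
end

/-- Concatenation `⊎` of tree types (sequences). -/
def TreeTy.cat : TreeTy → TreeTy → TreeTy
  | .node a, .node b => .node (a ++ b)

mutual
/-- Weight (size) of a linear type, with parameter `X`. -/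
def LinTy.weight (X : ℕ) : LinTy → ℕ
  | .star => 0
  | .arr T A => max (TreeTy.weight X T) (LinTy.weight X A + 1)
  termination_by A => sizeOf A
def GenTy.weight (X : ℕ) : GenTy → ℕ
  | .lin A => LinTy.weight X A
  | .tree T => TreeTy.weight X T
  termination_by g => sizeOf g
def TreeTy.weight (X : ℕ) : TreeTy → ℕ
  | .node gs => X + (gs.attach.map (fun g => GenTy.weight X g.1)).foldr max 0
  termination_by T => sizeOf T
  decreasing_by simp_wf; have := List.sizeOf_lt_of_mem g.2; omega
end

mutual
/-- Hereditary absence of empty sequences (every leaf context ends in `⋆`). -/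
inductive LinTy.Good : LinTy → Prop where
  | star : LinTy.Good .star
  | arr {T A} : TreeTy.Good T → LinTy.Good A → LinTy.Good (.arr T A)
inductive GenTy.Good : GenTy → Prop where
  | lin {A} : LinTy.Good A → GenTy.Good (.lin A)
  | tree {T} : TreeTy.Good T → GenTy.Good (.tree T)
inductive TreeTy.Good : TreeTy → Prop where
  | node {gs : List GenTy} : gs ≠ [] → (∀ g ∈ gs, GenTy.Good g) → TreeTy.Good (.node gs)
end

/-! ## Leaf contexts -/

/-- One-hole contexts into tree types whose hole sits at a leaf position. -/
inductive LeafCtx : Type where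
  | here (l r : List GenTy) : LeafCtx
  | deeper (l : List GenTy) (L : LeafCtx) (r : List GenTy) : LeafCtx

/-- Plugging a linear type into a leaf context. -/
def LeafCtx.plug : LeafCtx → LinTy → TreeTy
  | .here l r, A => .node (l ++ .lin A :: r)
  | .deeper l L r, A => .node (l ++ .tree (L.plug A) :: r)

/-- Number of leaves strictly to the left of the hole. -/
def LeafCtx.holeIdx : LeafCtx → ℕ
  | .here l _ => (TreeTy.node l).leaves.length
  | .deeper l L _ => (TreeTy.node l).leaves.length + L.holeIdx

/-! ## Type contexts -/

mutual
/-- Linear type contexts: `𝕃c ::= ⟨·⟩ | T → 𝕃c | 𝕋 → A`. -/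
inductive LinCtx : Type where
  | hole : LinCtx
  | arrR : TreeTy → LinCtx → LinCtx
  | arrL : TreeCtx → LinTy → LinCtx
/-- Tree type contexts. -/
inductive TreeCtx : Type where
  | node : List GenTy → GenCtx → List GenTy → TreeCtx
/-- Generic type contexts. -/
inductive GenCtx : Type where
  | lin : LinCtx → GenCtx
  | tree : TreeCtx → GenCtx
end

mutual
def LinCtx.plug : LinCtx → LinTy → LinTy
  | .hole, B => B
  | .arrR T C, B => .arr T (C.plug B)
  | .arrL C A, B => .arr (C.plug B) A
def TreeCtx.plug : TreeCtx → LinTy → TreeTy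
  | .node l C r, B => .node (l ++ C.plug B :: r)
def GenCtx.plug : GenCtx → LinTy → GenTy
  | .lin C, B => .lin (C.plug B)
  | .tree C, B => .tree (C.plug B)
end

mutual
/-- Branch size of a linear type context. -/
def LinCtx.bsize (X : ℕ) : LinCtx → ℕ
  | .hole => 0
  | .arrR _ C => 1 + C.bsize X
  | .arrL C _ => C.bsize X
def TreeCtx.bsize (X : ℕ) : TreeCtx → ℕ
  | .node _ C _ => X + C.bsize X
def GenCtx.bsize (X : ℕ) : GenCtx → ℕ
  | .lin C => C.bsize X
  | .tree C => C.bsize X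
end

/-! # λ-terms (de Bruijn) and Closed Call-by-Name -/

inductive Term : Type where
  | var : ℕ → Term
  | lam : Term → Term
  | app : Term → Term → Term

/-- Shifting of free indices `≥ c` by `d`. -/
def Term.lift (d : ℕ) : ℕ → Term → Term
  | c, .var n => if n < c then .var n else .var (n + d)
  | c, .lam t => .lam (Term.lift d (c+1) t)
  | c, .app t u => .app (Term.lift d c t) (Term.lift d c u)

/-- Capture-avoiding substitution of `u` for index `k`. -/
def Term.subst (u : Term) : ℕ → Term → Term
  | k, .var n => if n = k then Term.lift k 0 u else if k < n then .var (n-1) else .var n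
  | k, .lam t => .lam (Term.subst u (k+1) t)
  | k, .app t s => .app (Term.subst u k t) (Term.subst u k s)

/-- `t{x₀ := u}`. -/
def Term.subst0 (t u : Term) : Term := Term.subst u 0 t

def Term.ClosedUnder : Term → ℕ → Prop
  | .var n, k => n < k
  | .lam t, k => t.ClosedUnder (k+1)
  | .app t u, k => t.ClosedUnder k ∧ u.ClosedUnder k

/-- Closed terms: no free variables. -/
def Term.Closed (t : Term) : Prop := t.ClosedUnder 0

/-- Occurrence of a free variable. -/
def Term.FreeIn : Term → ℕ → Prop
  | .var n, x => n = x
  | .lam t, x => t.FreeIn (x+1)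
  | .app t u, x => t.FreeIn x ∨ u.FreeIn x

/-- Weak head reduction `(λy.t)u r₁…r_h →wh t{y:=u} r₁…r_h`. -/
inductive Whr : Term → Term → Prop where
  | beta (t u : Term) : Whr (.app (.lam t) u) (t.subst0 u)
  | appL {t t' : Term} (u : Term) : Whr t t' → Whr (.app t u) (.app t' u)

/-- `n`-step weak head reduction. -/
inductive WhN : ℕ → Term → Term → Prop where
  | refl (t : Term) : WhN 0 t t
  | step {n t u v} : Whr t u → WhN n u v → WhN (n+1) t v

/-! # Type environments and the tree type system -/

/-- Type environments: maps from (de Bruijn) variables to tree types. -/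
def Env : Type := ℕ → TreeTy

def Env.empty : Env := fun _ => .node []

/-- Pointwise concatenation `Γ ⊎ Δ`. -/
def Env.union (Γ Δ : Env) : Env := fun x => (Γ x).cat (Δ x)

/-- Environment of the variable axiom: `x : [A]`. -/
def Env.single (x : ℕ) (A : LinTy) : Env :=
  fun y => if y = x then .node [.lin A] else .node []

/-- Environment extension `Γ, x₀:T` (de Bruijn cons). -/
def Env.cons (T : TreeTy) (Γ : Env) : Env
  | 0 => T
  | n+1 => Γ n

/-- Wrap a (non-empty) tree type in one extra sequence layer. -/
def TreeTy.wrap : TreeTy → TreeTy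
  | .node [] => .node []
  | T => .node [.tree T]

/-- `[Γ]`: wrap each (non-empty) type of the environment in one extra layer. -/
def Env.wrap (Γ : Env) : Env := fun x => (Γ x).wrap

/-- Finite union of environments. -/
def Env.unionF {n : ℕ} (Γs : Fin n → Env) : Env :=
  (List.ofFn Γs).foldr Env.union Env.empty

/-- Tree type derivations. -/
inductive Deriv : Env → Term → GenTy → Type where
  | var (x : ℕ) (A : LinTy) : Deriv (Env.single x A) (.var x) (.lin A)
  | lam {Γ : Env} {T : TreeTy} {t : Term} {A : LinTy} :
      Deriv (Env.cons T Γ) t (.lin A) → Deriv Γ (.lam t) (.lin (.arr T A))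
  | lamStar (t : Term) : Deriv Env.empty (.lam t) (.lin .star)
  | app {Γ Δ : Env} {t u : Term} {T : TreeTy} {A : LinTy} :
      Deriv Γ t (.lin (.arr T A)) → Deriv Δ u (.tree T) →
      Deriv (Env.union Γ Δ) (.app t u) (.lin A)
  | many {t : Term} (n : ℕ) (Γs : Fin n → Env) (Gs : Fin n → GenTy)
      (prems : ∀ i, Deriv (Γs i) t (Gs i)) :
      Deriv (Env.wrap (Env.unionF Γs)) t (.tree (.node (List.ofFn Gs)))
  | none (t : Term) : Deriv Env.empty t (.tree (.node []))

/-- Size of a derivation: number of rules that are not T-many/T-none. -/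
def Deriv.size : ∀ {Γ t G}, Deriv Γ t G → ℕ
  | _, _, _, .var _ _ => 1
  | _, _, _, .lam π => π.size + 1
  | _, _, _, .lamStar _ => 1
  | _, _, _, .app π ρ => π.size + ρ.size + 1
  | _, _, _, .many n _ _ prems => ∑ i : Fin n, (prems i).size
  | _, _, _, .none _ => 0

/-- Weight of a weighted derivation, with parameter `X`. -/
def Deriv.weight (X : ℕ) : ∀ {Γ t G}, Deriv Γ t G → ℕ
  | _, _, _, .var _ A => A.weight X
  | _, _, _, .lam (T := T) (A := A) π => max (π.weight X) (LinTy.weight X (.arr T A))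
  | _, _, _, .lamStar _ => 0
  | _, _, _, .app π ρ => max (π.weight X) (ρ.weight X)
  | _, _, _, .many n _ _ prems => X + (Finset.univ.sup fun i => (prems i).weight X)
  | _, _, _, .none _ => 0

/-- `SubD π n π'`: the judgment of `π'` occurs in `π`, crossing `n` T-many rules
descending from it to the root. -/
inductive SubD : ∀ {Γ t G}, Deriv Γ t G → ℕ → ∀ {Γ' u G'}, Deriv Γ' u G' → Prop where
  | refl {Γ t G} (π : Deriv Γ t G) : SubD π 0 π
  | lam {Γ T t A} {π : Deriv (Env.cons T Γ) t (.lin A)} {n} {Γ' u G'} {π' : Deriv Γ' u G'} :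
      SubD π n π' → SubD (Deriv.lam π) n π'
  | appL {Γ Δ t u T A} {π : Deriv Γ t (.lin (.arr T A))} {ρ : Deriv Δ u (.tree T)}
      {n} {Γ' v G'} {π' : Deriv Γ' v G'} :
      SubD π n π' → SubD (Deriv.app π ρ) n π'
  | appR {Γ Δ t u T A} {π : Deriv Γ t (.lin (.arr T A))} {ρ : Deriv Δ u (.tree T)}
      {n} {Γ' v G'} {π' : Deriv Γ' v G'} :
      SubD ρ n π' → SubD (Deriv.app π ρ) n π'
  | many {t k} {Γs : Fin k → Env} {Gs : Fin k → GenTy} {prems : ∀ i, Deriv (Γs i) t (Gs i)}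
      (i : Fin k) {n} {Γ' u G'} {π' : Deriv Γ' u G'} :
      SubD (prems i) n π' → SubD (Deriv.many k Γs Gs prems) (n+1) π'

/-! ## Auxiliary lemmas for subject reduction -/

section Aux

/-- Lifting a term closed under `c` does nothing. -/
lemma Term.lift_closedUnder : ∀ (t : Term) (c : ℕ), t.ClosedUnder c → ∀ d, Term.lift d c t = t
  | .var n, c, h, d => by simp [Term.ClosedUnder] at h; simp [Term.lift, h]
  | .lam t, c, h, d => by
      simp only [Term.lift]
      rw [Term.lift_closedUnder t (c+1) h d]
  | .app t u, c, h, d => by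
      simp only [Term.lift]
      rw [Term.lift_closedUnder t c h.1 d, Term.lift_closedUnder u c h.2 d]

/-- Underlying list of a tree type. -/
def TreeTy.list : TreeTy → List GenTy
  | .node gs => gs

lemma TreeTy.node_list : ∀ T : TreeTy, TreeTy.node T.list = T
  | .node _ => rfl

lemma TreeTy.cat_list : ∀ T₁ T₂ : TreeTy, (T₁.cat T₂).list = T₁.list ++ T₂.list
  | .node _, .node _ => rfl

lemma Env.foldr_union_list (L : List Env) (x : ℕ) :
    ((L.foldr Env.union Env.empty) x).list = (L.map fun Γ => (Γ x).list).flatten := by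
  induction L with
  | nil => rfl
  | cons Γ L ih =>
      simp only [List.foldr_cons, List.map_cons, List.flatten_cons, ← ih]
      exact TreeTy.cat_list _ _

lemma Env.unionF_list {n : ℕ} (Γs : Fin n → Env) (x : ℕ) :
    Env.unionF Γs x = .node ((List.ofFn fun i => (Γs i x).list).flatten) := by
  rw [← TreeTy.node_list (Env.unionF Γs x)]
  unfold Env.unionF
  rw [Env.foldr_union_list, List.map_ofFn]
  rfl

/-- Relevance: variables not free (all `x ≥ k` with `t` closed under `k`) get the empty type. -/
lemma Deriv.closed_env {Γ : Env} {t : Term} {G : GenTy} (π : Deriv Γ t G) :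
    ∀ k, t.ClosedUnder k → ∀ x, k ≤ x → Γ x = .node [] := by
  induction π with
  | var y A =>
      intro k h x hx
      simp only [Term.ClosedUnder] at h
      have : x ≠ y := by omega
      simp [Env.single, this]
  | lam π ih =>
      intro k h x hx
      exact ih (k+1) h (x+1) (by omega)
  | lamStar t => intro _ _ _ _; rfl
  | app π ρ ih₁ ih₂ =>
      intro k h x hx
      have h1 := ih₁ k h.1 x hx
      have h2 := ih₂ k h.2 x hx
      show TreeTy.cat _ _ = _
      rw [h1, h2]; rfl
  | many n Γs Gs prems ih =>
      intro k h x hx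
      show (Env.unionF Γs x).wrap = _
      rw [Env.unionF_list]
      have : (List.ofFn fun i => (Γs i x).list) = List.replicate n [] := by
        rw [List.eq_replicate_iff]
        refine ⟨by simp, ?_⟩
        intro b hb
        rw [List.mem_ofFn] at hb
        obtain ⟨i, hi⟩ := hb
        simp only [← hi, ih i k h x hx]
        rfl
      rw [this]
      simp [TreeTy.wrap]
  | none t => intro _ _ _ _; rfl

lemma Deriv.env_empty {Γ : Env} {t : Term} {G : GenTy} (π : Deriv Γ t G) (h : t.Closed) :
    Γ = Env.empty :=
  funext fun x => π.closed_env 0 h x (Nat.zero_le x)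

lemma Deriv.size_recast {Γ Γ' : Env} {t : Term} {G : GenTy} (h : Γ = Γ') (π : Deriv Γ t G) :
    (h ▸ π : Deriv Γ' t G).size = π.size := by subst h; rfl

lemma Deriv.size_recastG {Γ : Env} {t : Term} {G G' : GenTy} (h : G = G') (π : Deriv Γ t G) :
    (h ▸ π : Deriv Γ t G').size = π.size := by subst h; rfl

/-- A bag of derivations of `u` (with empty environments), one per generic type in
`gs`, with sizes `ss`. -/
inductive Bag (u : Term) : List GenTy → List ℕ → Prop where
  | nil : Bag u [] []
  | cons {g : GenTy} {s : ℕ} {gs ss} (π : Deriv Env.empty u g) :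
      π.size = s → Bag u gs ss → Bag u (g :: gs) (s :: ss)

lemma Bag.ofFn {u : Term} : ∀ {n : ℕ} (Gs : Fin n → GenTy)
    (ps : ∀ i, Deriv Env.empty u (Gs i)),
    Bag u (List.ofFn Gs) (List.ofFn fun i => (ps i).size)
  | 0, _, _ => by simpa using Bag.nil
  | n+1, Gs, ps => by
      rw [List.ofFn_succ, List.ofFn_succ]
      exact Bag.cons (ps 0) rfl (Bag.ofFn _ fun i => ps i.succ)

lemma Bag.of_deriv {u : Term} (hu : u.Closed) {Δ : Env} {gs : List GenTy}
    (ρ : Deriv Δ u (.tree (.node gs))) :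
    ∃ ss : List ℕ, Bag u gs ss ∧ ss.sum ≤ ρ.size := by
  cases ρ with
  | many n Γs Gs prems =>
      have he : ∀ i, Γs i = Env.empty := fun i => (prems i).env_empty hu
      refine ⟨List.ofFn fun i => ((he i) ▸ prems i : Deriv Env.empty u (Gs i)).size,
        Bag.ofFn Gs (fun i => (he i) ▸ prems i), ?_⟩
      rw [List.sum_ofFn]
      apply le_of_eq
      show _ = Deriv.size (Deriv.many n Γs Gs prems)
      simp only [Deriv.size]
      exact Finset.sum_congr rfl fun i _ => Deriv.size_recast (he i) (prems i)
  | none =>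
      exact ⟨[], Bag.nil, Nat.zero_le _⟩

lemma Bag.get {u : Term} : ∀ {gs ss}, Bag u gs ss →
    ss.length = gs.length ∧
      ∀ (i : ℕ) (h : i < gs.length) (h' : i < ss.length),
        ∃ π : Deriv Env.empty u gs[i], π.size = ss[i] := by
  intro gs ss hb
  induction hb with
  | nil => exact ⟨rfl, fun i h => by simp at h⟩
  | cons π hs hb ih =>
      refine ⟨by simp [ih.1], ?_⟩
      intro i h h'
      match i with
      | 0 => exact ⟨π, hs⟩
      | i+1 => exact ih.2 i (by simpa using h) (by simpa using h')

lemma Env.unionF_empty {n : ℕ} {Γs : Fin n → Env} (h : ∀ i, Γs i = Env.empty) :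
    Env.unionF Γs = Env.empty := by
  funext x
  rw [Env.unionF_list]
  have : (List.ofFn fun i => (Γs i x).list) = List.replicate n [] := by
    rw [List.eq_replicate_iff]
    refine ⟨by simp, fun b hb => ?_⟩
    rw [List.mem_ofFn] at hb
    obtain ⟨i, hi⟩ := hb
    simp only [← hi, h i]
    rfl
  rw [this]; simp; rfl

lemma Env.wrap_empty : Env.wrap Env.empty = Env.empty := rfl

lemma Bag.to_deriv {u : Term} {gs ss} (hb : Bag u gs ss) :
    ∃ ρ : Deriv Env.empty u (.tree (.node gs)), ρ.size ≤ ss.sum := by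
  obtain ⟨hlen, hget⟩ := hb.get
  have ps : ∀ i : Fin gs.length, ∃ π : Deriv Env.empty u (gs.get i),
      π.size = ss[(i : ℕ)]'(by omega) := by
    intro i; exact hget i i.2 (by omega)
  choose ps hps using ps
  have h1 : Env.wrap (Env.unionF fun _ : Fin gs.length => Env.empty) = Env.empty := by
    rw [Env.unionF_empty (fun _ => rfl), Env.wrap_empty]
  have h2 : GenTy.tree (.node (List.ofFn fun i => gs.get i)) = GenTy.tree (.node gs) := by
    rw [List.ofFn_get gs]
  refine ⟨h2 ▸ (h1 ▸ Deriv.many gs.length (fun _ => Env.empty) (fun i => gs.get i) ps), ?_⟩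
  have hsize : (h2 ▸ (h1 ▸ Deriv.many gs.length (fun _ => Env.empty) (fun i => gs.get i) ps) :
      Deriv Env.empty u (.tree (.node gs))).size = ∑ i : Fin gs.length, (ps i).size := by
    rw [Deriv.size_recastG, Deriv.size_recast]
    rfl
  rw [hsize]
  apply le_of_eq
  calc ∑ i : Fin gs.length, (ps i).size
      = ∑ i : Fin gs.length, ss[(i : ℕ)]'(by omega) := by
          exact Finset.sum_congr rfl fun i _ => hps i
    _ = ss.sum := by
          rw [← List.sum_ofFn]
          congr 1
          apply List.ext_getElem (by simp [hlen])
          intro i h1 h2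
          simp

lemma Bag.split {u : Term} : ∀ (a : List GenTy) {b ss}, Bag u (a ++ b) ss →
    ∃ ss₁ ss₂, ss = ss₁ ++ ss₂ ∧ Bag u a ss₁ ∧ Bag u b ss₂ := by
  intro a
  induction a with
  | nil => intro b ss hb; exact ⟨[], ss, rfl, Bag.nil, hb⟩
  | cons g a ih =>
      intro b ss hb
      cases hb with
      | cons π hs hb =>
          obtain ⟨ss₁, ss₂, rfl, h1, h2⟩ := ih hb
          exact ⟨_ :: ss₁, ss₂, rfl, Bag.cons π hs h1, h2⟩

/-- Binary splitting of a tree derivation along `⊎`. -/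
lemma Deriv.split2 {u : Term} (hu : u.Closed) {Δ : Env} {T₁ T₂ : TreeTy} {a b : List GenTy}
    (h₁ : T₁ = .node a) (h₂ : T₂ = .node b) (ρ : Deriv Δ u (.tree (T₁.cat T₂))) :
    ∃ (ρ₁ : Deriv Env.empty u (.tree T₁)) (ρ₂ : Deriv Env.empty u (.tree T₂)),
      ρ₁.size + ρ₂.size ≤ ρ.size := by
  subst h₁; subst h₂
  obtain ⟨ss, hb, hsum⟩ := Bag.of_deriv (gs := a ++ b) hu ρ
  obtain ⟨ss₁, ss₂, rfl, hb1, hb2⟩ := Bag.split a hb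
  obtain ⟨ρ₁, hρ₁⟩ := hb1.to_deriv
  obtain ⟨ρ₂, hρ₂⟩ := hb2.to_deriv
  refine ⟨ρ₁, ρ₂, ?_⟩
  rw [List.sum_append] at hsum
  have hsum' : ss₁.sum + ss₂.sum ≤ ρ.size := hsum
  omega

lemma Env.unionF_succ {n : ℕ} (Γs : Fin (n+1) → Env) :
    Env.unionF Γs = Env.union (Γs 0) (Env.unionF fun i : Fin n => Γs i.succ) := by
  unfold Env.unionF
  rw [List.ofFn_succ]
  rfl

/-- n-ary splitting of a tree derivation of `⊎ᵢ Γᵢ(x)`. -/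
lemma Deriv.split_many {u : Term} (hu : u.Closed) :
    ∀ {n : ℕ} (Γs : Fin n → Env) (x : ℕ) (ρ : Deriv Env.empty u (.tree (Env.unionF Γs x))),
    ∃ ss : Fin n → ℕ,
      (∀ i, ∃ ρᵢ : Deriv Env.empty u (.tree (Γs i x)), ρᵢ.size = ss i) ∧
        ∑ i, ss i ≤ ρ.size := by
  intro n
  induction n with
  | zero => intro Γs x ρ; exact ⟨fun i => 0, fun i => i.elim0, by simp⟩
  | succ n ih =>
      intro Γs x ρ
      have hcat : Env.unionF Γs x
          = TreeTy.cat (Γs 0 x) (Env.unionF (fun i : Fin n => Γs i.succ) x) := by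
        rw [Env.unionF_succ]; rfl
      obtain ⟨a, ha⟩ : ∃ a, Γs 0 x = .node a := ⟨(Γs 0 x).list, (TreeTy.node_list _).symm⟩
      obtain ⟨b, hb⟩ : ∃ b, Env.unionF (fun i : Fin n => Γs i.succ) x = .node b :=
        ⟨_, (TreeTy.node_list _).symm⟩
      have hcatG : GenTy.tree (Env.unionF Γs x)
          = GenTy.tree (TreeTy.cat (Γs 0 x) (Env.unionF (fun i : Fin n => Γs i.succ) x)) :=
        congrArg GenTy.tree hcat
      obtain ⟨ρ₁, ρ₂, hs⟩ := Deriv.split2 hu ha hb (hcatG ▸ ρ)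
      obtain ⟨ss, hss, hsum⟩ := ih (fun i => Γs i.succ) x ρ₂
      refine ⟨Fin.cases ρ₁.size ss, ?_, ?_⟩
      · intro i
        refine Fin.cases ?_ ?_ i
        · exact ⟨ρ₁, by simp⟩
        · intro j
          obtain ⟨rj, hrj⟩ := hss j
          exact ⟨rj, by simp [hrj]⟩
      · simp only [Fin.sum_univ_succ, Fin.cases_zero, Fin.cases_succ]
        have := Deriv.size_recastG hcatG ρ
        omega

/-- Unwrapping: from a derivation of `T.wrap` extract one of `T`. -/
lemma Deriv.unwrap {u : Term} (hu : u.Closed) {T : TreeTy}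
    (ρ : Deriv Env.empty u (.tree T.wrap)) :
    ∃ ρ₀ : Deriv Env.empty u (.tree T), ρ₀.size ≤ ρ.size := by
  obtain ⟨l, rfl⟩ := (⟨T.list, (TreeTy.node_list T).symm⟩ : ∃ l, T = TreeTy.node l)
  cases l with
  | nil => exact ⟨Deriv.none u, Nat.zero_le _⟩
  | cons g l =>
      have hwG : GenTy.tree (TreeTy.wrap (.node (g :: l)))
          = GenTy.tree (.node [.tree (.node (g :: l))]) := rfl
      obtain ⟨ss, hbag, hsum⟩ := Bag.of_deriv hu (hwG ▸ ρ)
      cases hbag with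
      | cons π₀ hs htail =>
          cases htail
          refine ⟨π₀, ?_⟩
          have := Deriv.size_recastG hwG ρ
          simp at hsum
          exact hs.trans_le hsum

/-- Dropping variable `k` from an environment (de Bruijn). -/
def Env.drop (k : ℕ) (Γ : Env) : Env := fun x => Γ (if x < k then x else x + 1)

lemma Env.drop_single_self (k : ℕ) (A : LinTy) :
    Env.drop k (Env.single k A) = Env.empty := by
  funext y
  simp only [Env.drop, Env.single, Env.empty]
  split_ifs with h1 h2 h3 <;> first | rfl | omega

lemma Env.drop_single_lt {x k : ℕ} (h : x < k) (A : LinTy) :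
    Env.drop k (Env.single x A) = Env.single x A := by
  funext y
  simp only [Env.drop, Env.single]
  split_ifs <;> first | rfl | omega

lemma Env.drop_single_gt {x k : ℕ} (h : k < x) (A : LinTy) :
    Env.drop k (Env.single x A) = Env.single (x - 1) A := by
  funext y
  simp only [Env.drop, Env.single]
  split_ifs <;> first | rfl | omega

lemma Env.drop_cons (k : ℕ) (T : TreeTy) (Γ : Env) :
    Env.drop (k+1) (Env.cons T Γ) = Env.cons T (Env.drop k Γ) := by
  funext y
  cases y with
  | zero => show Env.cons T Γ (if 0 < k + 1 then 0 else 1) = T; rw [if_pos (by omega)]; rfl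
  | succ y =>
      show Env.cons T Γ (if y + 1 < k + 1 then y + 1 else y + 2)
          = Γ (if y < k then y else y + 1)
      by_cases h : y < k <;> simp [h, Env.cons]

/-- The substitution lemma (for a closed substituend). -/
theorem Deriv.subst_lemma {u : Term} (hu : u.Closed) {Γ : Env} {t : Term} {G : GenTy}
    (π : Deriv Γ t G) :
    ∀ (k : ℕ) (ρ : Deriv Env.empty u (.tree (Γ k))),
    ∃ π' : Deriv (Env.drop k Γ) (Term.subst u k t) G, π'.size ≤ π.size + ρ.size := by
  induction π with
  | var x A =>
      intro k ρ
      rcases Nat.lt_trichotomy x k with h | rfl | h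
      · have ht : Term.subst u k (.var x) = .var x := by
          simp only [Term.subst]
          rw [if_neg (by omega), if_neg (by omega)]
        rw [ht, Env.drop_single_lt h]
        exact ⟨Deriv.var x A, by simp [Deriv.size]⟩
      · have ht : Term.subst u x (.var x) = u := by
          simp only [Term.subst, if_pos rfl]
          exact Term.lift_closedUnder u 0 hu x
        rw [ht, Env.drop_single_self]
        have hT : GenTy.tree (Env.single x A x) = .tree (.node [.lin A]) := by
          simp [Env.single]
        obtain ⟨ss, hbag, hsum⟩ := Bag.of_deriv hu (hT ▸ ρ)
        cases hbag with
        | cons π₀ hs htail =>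
            cases htail
            refine ⟨π₀, ?_⟩
            have := Deriv.size_recastG hT ρ
            simp only [List.sum_cons, List.sum_nil] at hsum
            simp only [Deriv.size]
            omega
      · have ht : Term.subst u k (.var x) = .var (x - 1) := by
          simp only [Term.subst]
          rw [if_neg (by omega), if_pos (by omega)]
        rw [ht, Env.drop_single_gt h]
        exact ⟨Deriv.var (x - 1) A, by simp [Deriv.size]⟩
  | lam π ih =>
      intro k ρ
      obtain ⟨π', hπ'⟩ := ih (k+1) ρ
      simp only [Term.subst]
      refine ⟨Deriv.lam (Env.drop_cons k _ _ ▸ π'), ?_⟩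
      simp only [Deriv.size, Deriv.size_recast]
      have hπ'' : π'.size ≤ π.size + ρ.size := hπ'
      omega
  | lamStar t =>
      intro k ρ
      exact ⟨Deriv.lamStar _, by simp [Deriv.size]⟩
  | app π₁ π₂ ih₁ ih₂ =>
      intro k ρ
      rename_i Γ₁ Γ₂ t r T A
      obtain ⟨a, ha⟩ := (⟨(Γ₁ k).list, (TreeTy.node_list _).symm⟩ : ∃ a, Γ₁ k = TreeTy.node a)
      obtain ⟨b, hb⟩ := (⟨(Γ₂ k).list, (TreeTy.node_list _).symm⟩ : ∃ b, Γ₂ k = TreeTy.node b)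
      obtain ⟨ρ₁, ρ₂, hs⟩ := Deriv.split2 (T₁ := Γ₁ k) (T₂ := Γ₂ k) hu ha hb ρ
      obtain ⟨π₁', h₁⟩ := ih₁ k ρ₁
      obtain ⟨π₂', h₂⟩ := ih₂ k ρ₂
      refine ⟨Deriv.app π₁' π₂', ?_⟩
      simp only [Deriv.size]
      have hs' : ρ₁.size + ρ₂.size ≤ ρ.size := hs
      have h₁' : π₁'.size ≤ π₁.size + ρ₁.size := h₁
      have h₂' : π₂'.size ≤ π₂.size + ρ₂.size := h₂
      show π₁'.size + π₂'.size + 1 ≤ π₁.size + π₂.size + 1 + ρ.size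
      omega
  | many n Γs Gs prems ih =>
      intro k ρ
      obtain ⟨ρ₀, hρ₀⟩ := Deriv.unwrap hu (T := Env.unionF Γs k) ρ
      obtain ⟨ss, hss, hsum⟩ := Deriv.split_many hu Γs k ρ₀
      choose rs hrs using hss
      have pi' := fun i => ih i k (rs i)
      choose ps hps using pi'
      have henv : Env.wrap (Env.unionF fun i => Env.drop k (Γs i))
          = Env.drop k (Env.wrap (Env.unionF Γs)) := by
        funext x
        show (Env.unionF (fun i => Env.drop k (Γs i)) x).wrap
            = (Env.unionF Γs (if x < k then x else x + 1)).wrap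
        rw [Env.unionF_list, Env.unionF_list]
        rfl
      refine ⟨henv ▸ Deriv.many n _ Gs ps, ?_⟩
      rw [Deriv.size_recast]
      show ∑ i, (ps i).size ≤ (∑ i, (prems i).size) + ρ.size
      calc ∑ i, (ps i).size ≤ ∑ i, ((prems i).size + (rs i).size) :=
            Finset.sum_le_sum fun i _ => hps i
        _ = (∑ i, (prems i).size) + ∑ i, (rs i).size := Finset.sum_add_distrib
        _ = (∑ i, (prems i).size) + ∑ i, ss i := by
            congr 1
            exact Finset.sum_congr rfl fun i _ => hrs i
        _ ≤ (∑ i, (prems i).size) + ρ.size := by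
            have hρ₀' : ρ₀.size ≤ ρ.size := hρ₀
            omega
  | none t =>
      intro k ρ
      exact ⟨Deriv.none _, by simp [Deriv.size]⟩

/-- Explicit environment recast. -/
def Deriv.recast {Γ Γ' : Env} {t : Term} {G : GenTy} (h : Γ = Γ') (π : Deriv Γ t G) :
    Deriv Γ' t G := h ▸ π

lemma Deriv.size_recast' {Γ Γ' : Env} {t : Term} {G : GenTy} (h : Γ = Γ') (π : Deriv Γ t G) :
    (π.recast h).size = π.size := by subst h; rfl

lemma Env.drop_cons_zero (T : TreeTy) (Γ : Env) :
    Env.drop 0 (Env.cons T Γ) = Γ := by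
  funext y
  show Env.cons T Γ (if y < 0 then y else y + 1) = Γ y
  rw [if_neg (by omega)]
  rfl

theorem Deriv.whr_aux {Γ : Env} {t : Term} {G : GenTy} (π : Deriv Γ t G) :
    ∀ {u : Term}, Whr t u → t.Closed → ∀ {A : LinTy}, G = .lin A → Γ = Env.empty →
    ∃ π' : Deriv Env.empty u (.lin A), π'.size < π.size := by
  induction π with
  | var x _ => intro u hr; cases hr
  | lam _ _ => intro u hr; cases hr
  | lamStar _ => intro u hr; cases hr
  | many n Γs Gs prems ih => intro u hr hc A hG hΓ; exact GenTy.noConfusion hG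
  | none _ => intro u hr hc A hG hΓ; exact GenTy.noConfusion hG
  | app π₁ π₂ ih₁ ih₂ =>
      rename_i Γ₁ Γ₂ t r T A'
      intro u hr hc A hG hΓ
      cases hG
      have hct : t.ClosedUnder 0 := hc.1
      have hcr : r.ClosedUnder 0 := hc.2
      have hΓ₁ : Γ₁ = Env.empty := π₁.env_empty hct
      have hΓ₂ : Γ₂ = Env.empty := π₂.env_empty hcr
      cases hr with
      | beta t₀ r =>
          cases π₁ with
          | lam π₀ =>
              subst hΓ₁; subst hΓ₂
              obtain ⟨π', hπ'⟩ := Deriv.subst_lemma hcr π₀ 0 π₂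
              refine ⟨π'.recast (Env.drop_cons_zero T Env.empty), ?_⟩
              show (π'.recast (Env.drop_cons_zero T Env.empty)).size < _
              rw [Deriv.size_recast']
              simp only [Deriv.size]
              have hπ'' : π'.size ≤ π₀.size + π₂.size := hπ'
              show π'.size < π₀.size + 1 + π₂.size + 1
              omega
      | appL _ hr' =>
          subst hΓ₁; subst hΓ₂
          obtain ⟨π₁', h₁⟩ := ih₁ hr' hct rfl rfl
          refine ⟨Deriv.app π₁' π₂, ?_⟩
          simp only [Deriv.size]
          omega

end Aux

/-- quantitative subject reduction. -/
theorem quantitative_subject_reduction {t u : Term} {A : LinTy}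
    (hc : t.Closed) (π : Deriv Env.empty t (.lin A)) (hr : Whr t u) :
    ∃ π' : Deriv Env.empty u (.lin A), π'.size < π.size :=
  π.whr_aux hr hc rfl rfl
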